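/- Let G be an AH-algebra and let g ∈ G with 0 ≤ g. Then g is invertible (i.e., there exists h ∈ G with gh = hg = 1) if and only if there exists M ∈ ℕ such that 1 ≤ M·g. Moreover, if g is invertible, then 0 ≤ g⁻¹ and g⁻¹ ∈ CC(g). -/

import Mathlib

/-- An e-ring `(R,E)`: an associative ring `R` with unity together with a set `E ⊆ R`
of effects, satisfying the Foulis axioms.  `E⁺` is realized as the additive submonoid
closure of `E` (the set of all finite sums of effects). -/
structure ERing (R : Type*) [Ring R] where
  E : Set R
  zero_mem : (0 : R) ∈ E
  one_mem : (1 : R) ∈ E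
  compl_mem : ∀ e ∈ E, 1 - e ∈ E
  epos_i : ∀ a ∈ AddSubmonoid.closure E, -a ∈ AddSubmonoid.closure E → a = 0
  epos_ii : ∀ a ∈ AddSubmonoid.closure E, 1 - a ∈ AddSubmonoid.closure E → a ∈ E
  epos_iii : ∀ a ∈ AddSubmonoid.closure E, ∀ b ∈ AddSubmonoid.closure E,
    a * b = b * a → a * b ∈ AddSubmonoid.closure E
  epos_iv : ∀ a ∈ AddSubmonoid.closure E, ∀ b ∈ AddSubmonoid.closure E,
    a * b * a ∈ AddSubmonoid.closure E
  epos_v : ∀ a ∈ AddSubmonoid.closure E, ∀ b ∈ AddSubmonoid.closure E,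
    a * b * a = 0 → a * b = 0 ∧ b * a = 0
  epos_vi : ∀ a ∈ AddSubmonoid.closure E, ∀ b ∈ AddSubmonoid.closure E,
    (a - b) ^ 2 ∈ AddSubmonoid.closure E
  zero_ne_one : (0 : R) ≠ 1

namespace ERing

variable {R : Type*} [Ring R] (er : ERing R)

/-- `E⁺`, the set of all finite sums of effects; the positive cone of the directed group. -/
def Epos : Set R := (AddSubmonoid.closure er.E : Set R)

/-- The directed group `G = E⁺ - E⁺` of the e-ring. -/
def G : Set R := {g | ∃ a ∈ er.Epos, ∃ b ∈ er.Epos, g = a - b}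

/-- The partial order on the directed group: `g ≤ h` iff `h - g ∈ E⁺`. -/
def le (g h : R) : Prop := h - g ∈ er.Epos

/-- The set of projections `P = {p ∈ G : p = p²}`. -/
def P : Set R := {p | p ∈ er.G ∧ p = p ^ 2}

/-- The commutant in `G` of a subset `A ⊆ G`. -/
def commutant (A : Set R) : Set R := {g | g ∈ er.G ∧ ∀ a ∈ A, g * a = a * g}

/-- The bicommutant in `G` of a subset `A ⊆ G`. -/
def CC (A : Set R) : Set R := er.commutant (er.commutant A)

/-- `s` is the supremum of `A` within the subset `S` (w.r.t. the e-ring order). -/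
def IsSupIn (S A : Set R) (s : R) : Prop :=
  s ∈ S ∧ (∀ a ∈ A, er.le a s) ∧ ∀ b ∈ S, (∀ a ∈ A, er.le a b) → er.le s b

/-- `s` is the infimum of `A` within the subset `S` (w.r.t. the e-ring order). -/
def IsInfIn (S A : Set R) (s : R) : Prop :=
  s ∈ S ∧ (∀ a ∈ A, er.le s a) ∧ ∀ b ∈ S, (∀ a ∈ A, er.le b a) → er.le b s

/-- Quadratic annihilation property. -/
def HasQA : Prop := ∀ g ∈ er.G, ∀ h ∈ er.G, g * h ^ 2 * g = 0 → g * h = 0 ∧ h * g = 0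

/-- Commutative Vigier property: every ascending sequence of pairwise commuting elements
of `G` bounded above in `G` has a supremum in `G` which double commutes with the sequence. -/
def HasCV : Prop :=
  ∀ g : ℕ → R, (∀ n, g n ∈ er.G) → (∀ n, er.le (g n) (g (n + 1))) →
    (∀ m n, g m * g n = g n * g m) → (∃ b ∈ er.G, ∀ n, er.le (g n) b) →
    ∃ s, er.IsSupIn er.G (Set.range g) s ∧ s ∈ er.CC (Set.range g)

/-- `G` is an abstract Hermitian (AH) algebra: there is a semitransparent effect `½`,
`G` has quadratic annihilation, and `G` has the commutative Vigier property. -/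
def IsAH : Prop := (∃ h ∈ er.E, h + h = 1) ∧ er.HasQA ∧ er.HasCV

end ERing

section Aux

namespace ERing

variable {R : Type*} [Ring R] (er : ERing R)

lemma mem_Epos_of_mem_E {e : R} (he : e ∈ er.E) : e ∈ er.Epos :=
  AddSubmonoid.subset_closure he

lemma zero_Epos : (0 : R) ∈ er.Epos := (AddSubmonoid.closure er.E).zero_mem

lemma one_Epos : (1 : R) ∈ er.Epos := er.mem_Epos_of_mem_E er.one_mem

lemma add_Epos {a b : R} (ha : a ∈ er.Epos) (hb : b ∈ er.Epos) : a + b ∈ er.Epos :=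
  (AddSubmonoid.closure er.E).add_mem ha hb

lemma nsmul_Epos {a : R} (ha : a ∈ er.Epos) (n : ℕ) : n • a ∈ er.Epos :=
  (AddSubmonoid.closure er.E).nsmul_mem ha n

lemma natCast_Epos (n : ℕ) : (n : R) ∈ er.Epos := by
  have := er.nsmul_Epos er.one_Epos n
  rwa [nsmul_eq_mul, mul_one] at this

lemma Epos_subset_G {a : R} (ha : a ∈ er.Epos) : a ∈ er.G :=
  ⟨a, ha, 0, er.zero_Epos, by rw [sub_zero]⟩

lemma G_sub {a b : R} (ha : a ∈ er.G) (hb : b ∈ er.G) : a - b ∈ er.G := by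
  obtain ⟨x, hx, y, hy, rfl⟩ := ha
  obtain ⟨z, hz, w, hw, rfl⟩ := hb
  exact ⟨x + w, er.add_Epos hx hw, y + z, er.add_Epos hy hz, by abel⟩

lemma le_trans' {a b c : R} (hab : er.le a b) (hbc : er.le b c) : er.le a c := by
  have := er.add_Epos hab hbc
  simpa [ERing.le, show b - a + (c - b) = c - a by abel] using this

lemma mul_Epos {a b : R} (ha : a ∈ er.Epos) (hb : b ∈ er.Epos) (hc : a * b = b * a) :
    a * b ∈ er.Epos := er.epos_iii a ha b hb hc

lemma pow_Epos {a : R} (ha : a ∈ er.Epos) (n : ℕ) : a ^ n ∈ er.Epos := by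
  induction n with
  | zero => simpa using er.one_Epos
  | succ n ih =>
    have := er.mul_Epos ih ha (Commute.pow_left rfl n)
    simpa [pow_succ] using this

lemma sq_Epos_of_G {a : R} (ha : a ∈ er.G) : a ^ 2 ∈ er.Epos := by
  obtain ⟨x, hx, y, hy, rfl⟩ := ha
  exact er.epos_vi x hx y hy

/-- Every element of `E⁺` is bounded above by a natural multiple of `1`. -/
lemma Epos_bounded {a : R} (ha : a ∈ er.Epos) : ∃ n : ℕ, er.le a ((n : R)) := by
  induction ha using AddSubmonoid.closure_induction with
  | mem x hx =>
    exact ⟨1, by simpa [ERing.le] using er.mem_Epos_of_mem_E (er.compl_mem x hx)⟩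
  | zero => exact ⟨0, by simpa [ERing.le] using er.zero_Epos⟩
  | add x y hx hy ihx ihy =>
    obtain ⟨n, hn⟩ := ihx
    obtain ⟨m, hm⟩ := ihy
    refine ⟨n + m, ?_⟩
    have := er.add_Epos hn hm
    simpa [ERing.le, Nat.cast_add, show (n : R) - x + ((m : R) - y) = (n : R) + m - (x + y) by
      abel] using this

/-- Archimedean property, derived from the commutative Vigier property. -/
lemma arch (hCV : er.HasCV) {u b : R} (hu : u ∈ er.Epos) (hb : b ∈ er.G)
    (h : ∀ n : ℕ, er.le (n • u) b) : u = 0 := by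
  obtain ⟨s, ⟨hsG, hub, hlub⟩, -⟩ :=
    hCV (fun n => n • u) (fun n => er.Epos_subset_G (er.nsmul_Epos hu n))
      (fun n => by
        show (n + 1) • u - n • u ∈ er.Epos
        rw [succ_nsmul, add_sub_cancel_left]; exact hu)
      (fun m n => by
        simp only [smul_mul_assoc, mul_smul_comm, smul_comm m n (u * u)])
      ⟨b, hb, h⟩
  have hb' : s - u ∈ er.G := er.G_sub hsG (er.Epos_subset_G hu)
  have hub' : ∀ a ∈ Set.range (fun n : ℕ => n • u), er.le a (s - u) := by
    rintro a ⟨n, rfl⟩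
    have := hub ((n + 1) • u) ⟨n + 1, rfl⟩
    show s - u - n • u ∈ er.Epos
    rw [sub_sub, ← succ_nsmul']
    exact this
  have hle := hlub (s - u) hb' hub'
  have hneg : -u ∈ er.Epos := by simpa [ERing.le] using hle
  exact er.epos_i u hu hneg

end ERing

/-- Geometric partial sums `1 + t + t² + ⋯ + tⁿ`, defined recursively. -/
def geomSeq {R : Type*} [Ring R] (t : R) : ℕ → R
  | 0 => 1
  | n + 1 => 1 + t * geomSeq t n

namespace ERing

variable {R : Type*} [Ring R]

lemma geomSeq_succ' (t : R) (n : ℕ) : geomSeq t (n + 1) = geomSeq t n + t ^ (n + 1) := by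
  induction n with
  | zero => simp [geomSeq]
  | succ n ih =>
    rw [show geomSeq t (n + 2) = 1 + t * geomSeq t (n + 1) from rfl, ih, mul_add,
      show t * t ^ (n + 1) = t ^ (n + 1 + 1) from ((pow_succ' t (n + 1)).symm),
      ← add_assoc, show (1 : R) + t * geomSeq t n = geomSeq t (n + 1) from rfl, ih]

lemma commute_geomSeq {t x : R} (hx : x * t = t * x) (n : ℕ) :
    x * geomSeq t n = geomSeq t n * x := by
  induction n with
  | zero => simp [geomSeq]
  | succ n ih =>
    show x * (1 + t * geomSeq t n) = (1 + t * geomSeq t n) * x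
    rw [mul_add, add_mul, mul_one, one_mul, ← mul_assoc, hx, mul_assoc, ih, mul_assoc]

lemma one_sub_mul_geomSeq (t : R) (n : ℕ) :
    (1 - t) * geomSeq t n = 1 - t ^ (n + 1) := by
  induction n with
  | zero => simp [geomSeq]
  | succ n ih =>
    have ht : (1 - t) * t = t * (1 - t) := by noncomm_ring
    show (1 - t) * (1 + t * geomSeq t n) = _
    rw [mul_add, mul_one, ← mul_assoc, ht, mul_assoc, ih, mul_sub, mul_one,
      ← pow_succ']
    noncomm_ring

variable (er : ERing R)

lemma geomSeq_Epos {t : R} (ht : t ∈ er.Epos) (n : ℕ) : geomSeq t n ∈ er.Epos := by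
  induction n with
  | zero => simpa [geomSeq] using er.one_Epos
  | succ n ih =>
    have := er.add_Epos er.one_Epos (er.mul_Epos ht ih (commute_geomSeq (t := t) rfl n))
    simpa [geomSeq] using this

variable (er : ERing R)

/-- If `0 ≤ g` has an inverse in `G`, then `1 ≤ M • g` for some natural `M`. -/
lemma inv_bound {g h : R} (hgE : g ∈ er.Epos) (hhG : h ∈ er.G) (hgh : g * h = 1)
    (hhg : h * g = 1) : ∃ M : ℕ, er.le 1 (M • g) := by
  have hh2 : h ^ 2 ∈ er.Epos := er.sq_Epos_of_G hhG
  obtain ⟨K, hK⟩ := er.Epos_bounded hh2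
  obtain ⟨N, hN⟩ := er.Epos_bounded hgE
  refine ⟨K * N, ?_⟩
  have cK : ∀ x : R, (K : R) * x = x * (K : R) := fun x => (Nat.cast_commute K x).eq
  have cN : ∀ x : R, (N : R) * x = x * (N : R) := fun x => (Nat.cast_commute N x).eq
  have hgh2g : g * h ^ 2 * g = 1 := by
    have : g * h ^ 2 * g = (g * h) * (h * g) := by rw [pow_two]; noncomm_ring
    rw [this, hgh, hhg, one_mul]
  have e1 : g * ((K : R) - h ^ 2) * g = (K : R) * (g * g) - 1 := by
    rw [mul_sub, sub_mul, hgh2g, ← cK g, mul_assoc]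
  have m1 : (K : R) * (g * g) - 1 ∈ er.Epos := by
    rw [← e1]; exact er.epos_iv g hgE _ hK
  have m2 : (K : R) * ((N : R) * g - g * g) ∈ er.Epos := by
    have hin : (N : R) * g - g * g ∈ er.Epos := by
      have : ((N : R) - g) * g = (N : R) * g - g * g := by rw [sub_mul]
      rw [← this]
      refine er.mul_Epos hN hgE ?_
      rw [sub_mul, mul_sub, cN g]
    refine er.mul_Epos (er.natCast_Epos K) hin (cK _)
  have efin : ((K * N : ℕ) : R) * g - 1 =
      (K : R) * ((N : R) * g - g * g) + ((K : R) * (g * g) - 1) := by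
    rw [Nat.cast_mul, mul_sub, mul_assoc]
    abel
  show ((K * N : ℕ)) • g - 1 ∈ er.Epos
  rw [nsmul_eq_mul, efin]
  exact er.add_Epos m2 m1

section Half

variable {half : R} (h2 : half + half = 1)
include h2

lemma half_central (x : R) : half * x = x * half := by
  set y := half * x - x * half with hy
  have hyy : y + y = 0 := by
    have h1 : (half + half) * x - x * (half + half) = y + y := by
      rw [add_mul, mul_add, hy]; abel
    rw [h2] at h1
    rw [← h1, one_mul, mul_one, sub_self]
  have hy0 : y = 0 := by
    calc y = 1 * y := (one_mul y).symm
      _ = (half + half) * y := by rw [h2]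
      _ = half * (y + y) := by rw [add_mul, mul_add]
      _ = 0 := by rw [hyy, mul_zero]
  have := sub_eq_zero.mp (hy ▸ hy0)
  exact this

lemma halfpow_central (x : R) (n : ℕ) : half ^ n * x = x * half ^ n :=
  ((Commute.pow_left (half_central h2 x) n).eq)

lemma halfpow_mul_two_pow (n : ℕ) : half ^ n * (2 : R) ^ n = 1 := by
  have hc : Commute half (2 : R) := (half_central h2 2)
  have h21 : half * (2 : R) = 1 := by
    rw [half_central h2 2, two_mul, h2]
  calc half ^ n * (2 : R) ^ n = (half * 2) ^ n := (hc.mul_pow n).symm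
    _ = 1 := by rw [h21, one_pow]

omit h2 in
lemma one_sub_halfpow_Epos (hE : half ∈ er.E) (n : ℕ) : 1 - half ^ n ∈ er.Epos := by
  induction n with
  | zero => simpa using er.zero_Epos
  | succ n ih =>
    have hsplit : 1 - half ^ (n + 1) = (1 - half ^ n) + half ^ n * (1 - half) := by
      rw [mul_sub, mul_one, ← pow_succ]; abel
    rw [hsplit]
    refine er.add_Epos ih (er.mul_Epos (er.pow_Epos (er.mem_Epos_of_mem_E hE) n)
      (er.mem_Epos_of_mem_E (er.compl_mem half hE)) ?_)
    rw [mul_sub, sub_mul, mul_one, one_mul, ← pow_succ, ← pow_succ']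

end Half

/-- Main construction: if `0 ≤ g` and `1 ≤ M • g`, then `g` has a positive inverse
lying in the bicommutant of `g`. -/
lemma inv_construct (hAH : er.IsAH) {g : R} (hg : g ∈ er.G) (hg0 : er.le 0 g)
    {M : ℕ} (hM : er.le 1 (M • g)) :
    ∃ h, h ∈ er.Epos ∧ g * h = 1 ∧ h * g = 1 ∧ h ∈ er.CC {g} := by
  obtain ⟨⟨half, halfE, h2⟩, -, hCV⟩ := hAH
  have hgE : g ∈ er.Epos := by simpa [ERing.le] using hg0
  obtain ⟨N, hN⟩ := er.Epos_bounded hgE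
  set r := max M N with hr
  have hM2 : M ≤ 2 ^ r := le_of_lt (lt_of_le_of_lt (le_max_left M N) (Nat.lt_two_pow_self (n := r)))
  have hN2 : N ≤ 2 ^ r := le_of_lt (lt_of_le_of_lt (le_max_right M N) (Nat.lt_two_pow_self (n := r)))
  obtain ⟨c, hc_def⟩ : ∃ x : R, x = half ^ r := ⟨_, rfl⟩
  have hc : c ∈ er.Epos := by
    rw [hc_def]; exact er.pow_Epos (er.mem_Epos_of_mem_E halfE) r
  have hcen : ∀ x : R, c * x = x * c := by
    intro x; rw [hc_def]; exact halfpow_central h2 x r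
  have hc2 : c * (2 : R) ^ r = 1 := by rw [hc_def]; exact halfpow_mul_two_pow h2 r
  have ctwo : ((2 ^ r : ℕ) : R) = (2 : R) ^ r := by push_cast; ring_nf
  -- the element t = 1 - c * g
  obtain ⟨t, ht_def⟩ : ∃ x : R, x = 1 - c * g := ⟨_, rfl⟩
  have hcgeq : 1 - t = c * g := by rw [ht_def, sub_sub_cancel]
  have comm_t : ∀ x : R, x * g = g * x → x * t = t * x := by
    intro x hx
    have hkey : x * (c * g) = (c * g) * x := by
      rw [← mul_assoc, ← hcen x, mul_assoc, hx, ← mul_assoc]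
    rw [ht_def, mul_sub, sub_mul, mul_one, one_mul, hkey]
  have ht : t ∈ er.Epos := by
    have hw : ((2 ^ r : ℕ) : R) - g ∈ er.Epos := by
      have hcast : ((2 ^ r - N : ℕ) : R) = ((2 ^ r : ℕ) : R) - (N : R) := by
        rw [Nat.cast_sub hN2]
      have := er.add_Epos (er.natCast_Epos (2 ^ r - N)) hN
      rw [hcast] at this
      have heq : ((2 ^ r : ℕ) : R) - (N : R) + ((N : R) - g) = ((2 ^ r : ℕ) : R) - g := by
        abel
      rwa [heq] at this
    have hcw : c * (((2 ^ r : ℕ) : R) - g) = t := by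
      rw [mul_sub, ctwo, hc2, ht_def]
    rw [← hcw]
    exact er.mul_Epos hc hw (hcen _)
  -- g - c ≥ 0 from 1 ≤ M g
  have hv : (2 : R) ^ r * g - 1 ∈ er.Epos := by
    have hsplit : (2 : R) ^ r * g - 1 = ((2 ^ r - M : ℕ) : R) * g + ((M : R) * g - 1) := by
      rw [Nat.cast_sub hM2, sub_mul, ctwo]
      abel
    rw [hsplit]
    refine er.add_Epos (er.mul_Epos (er.natCast_Epos _) hgE (Nat.cast_commute _ g).eq) ?_
    have : M • g - 1 ∈ er.Epos := hM
    rwa [nsmul_eq_mul] at this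
  have hgc : g - c ∈ er.Epos := by
    have heq : c * ((2 : R) ^ r * g - 1) = g - c := by
      rw [mul_sub, mul_one, ← mul_assoc, hc2, one_mul]
    rw [← heq]
    exact er.mul_Epos hc hv (hcen _)
  -- the scalar bound lam = 1 - c * c
  obtain ⟨lam, hlam_def⟩ : ∃ x : R, x = 1 - c * c := ⟨_, rfl⟩
  have hlam : lam ∈ er.Epos := by
    have := er.one_sub_halfpow_Epos halfE (r + r)
    rwa [pow_add, ← hc_def, ← hlam_def] at this
  have comm_lam : ∀ x : R, x * lam = lam * x := by
    intro x
    rw [hlam_def, mul_sub, sub_mul, mul_one, one_mul, ← mul_assoc, ← hcen x,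
      mul_assoc, ← hcen x, ← mul_assoc]
  have clam : ∀ x : R, Commute lam x := fun x => (comm_lam x).symm
  have hlamt : lam - t ∈ er.Epos := by
    have heq : c * (g - c) = lam - t := by
      rw [mul_sub, hlam_def, ht_def]; abel
    rw [← heq]
    exact er.mul_Epos hc hgc (hcen _)
  have hlamt_t : (lam - t) * t = t * (lam - t) := ((clam t).sub_left (Commute.refl t)).eq
  -- the geometric sequences
  have hS : ∀ n, geomSeq t n ∈ er.Epos := er.geomSeq_Epos ht
  have hgt : g * t = t * g := comm_t g rfl
  have hgS : ∀ n, g * geomSeq t n = geomSeq t n * g := fun n => commute_geomSeq hgt n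
  have hLS : ∀ n, geomSeq lam n - geomSeq t n ∈ er.Epos := by
    intro n
    induction n with
    | zero => simpa [geomSeq] using er.zero_Epos
    | succ n ih =>
      have heq : geomSeq lam (n + 1) - geomSeq t (n + 1) =
          lam * (geomSeq lam n - geomSeq t n) + (lam - t) * geomSeq t n := by
        show 1 + lam * geomSeq lam n - (1 + t * geomSeq t n) = _
        rw [mul_sub, sub_mul]
        abel
      rw [heq]
      exact er.add_Epos
        (er.mul_Epos hlam ih (comm_lam _).symm)
        (er.mul_Epos hlamt (hS n) (commute_geomSeq hlamt_t n))
  -- the upper bound B = 2 ^ (r + r)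
  obtain ⟨B, hB_def⟩ : ∃ x : R, x = ((2 ^ (r + r) : ℕ) : R) := ⟨_, rfl⟩
  have hBpow : B = (2 : R) ^ (r + r) := by rw [hB_def]; push_cast; ring_nf
  have hB : B ∈ er.Epos := by rw [hB_def]; exact er.natCast_Epos _
  have hccB : (c * c) * B = 1 := by
    rw [hBpow, hc_def, ← pow_add]
    exact halfpow_mul_two_pow h2 (r + r)
  have hlamB : lam * B = B - 1 := by
    rw [hlam_def, sub_mul, one_mul, hccB]
  have hLB : ∀ n, B - geomSeq lam n ∈ er.Epos := by
    intro n
    induction n with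
    | zero =>
      have h1 : ((2 ^ (r + r) - 1 : ℕ) : R) ∈ er.Epos := er.natCast_Epos _
      rw [Nat.cast_sub Nat.one_le_two_pow, Nat.cast_one, ← hB_def] at h1
      simpa [geomSeq] using h1
    | succ n ih =>
      have heq : B - geomSeq lam (n + 1) = lam * (B - geomSeq lam n) := by
        show B - (1 + lam * geomSeq lam n) = _
        rw [mul_sub, hlamB]; abel
      rw [heq]
      exact er.mul_Epos hlam ih (comm_lam _).symm
  have hSB : ∀ n, B - geomSeq t n ∈ er.Epos := by
    intro n
    have h1 := er.add_Epos (hLB n) (hLS n)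
    have heq : B - geomSeq lam n + (geomSeq lam n - geomSeq t n) = B - geomSeq t n := by abel
    rwa [heq] at h1
  -- apply the commutative Vigier property
  have hScomm : ∀ m n, geomSeq t m * geomSeq t n = geomSeq t n * geomSeq t m := by
    intro m n
    exact commute_geomSeq (commute_geomSeq (t := t) rfl m).symm n
  obtain ⟨σ, ⟨hσG, hub, hlub⟩, hσcc⟩ :=
    hCV (geomSeq t) (fun n => er.Epos_subset_G (hS n))
      (fun n => by
        show geomSeq t (n + 1) - geomSeq t n ∈ er.Epos
        rw [geomSeq_succ', add_sub_cancel_left]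
        exact er.pow_Epos ht (n + 1))
      hScomm
      ⟨B, er.Epos_subset_G hB, fun n => hSB n⟩
  have hσg : σ * g = g * σ :=
    hσcc.2 g ⟨hg, by rintro a ⟨n, rfl⟩; exact hgS n⟩
  have hσt : σ * t = t * σ :=
    hσcc.2 t ⟨er.Epos_subset_G ht, by rintro a ⟨n, rfl⟩; exact commute_geomSeq rfl n⟩
  have hσS : ∀ n, σ * geomSeq t n = geomSeq t n * σ := fun n =>
    hσcc.2 (geomSeq t n) ⟨er.Epos_subset_G (hS n), by rintro a ⟨m, rfl⟩; exact hScomm n m⟩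
  have hσE : σ ∈ er.Epos := by
    have h1 : σ - 1 ∈ er.Epos := hub (geomSeq t 0) ⟨0, rfl⟩
    have h2' := er.add_Epos h1 er.one_Epos
    rwa [sub_add_cancel] at h2'
  -- σ ≤ t σ + 1
  have htσ : t * σ = σ * t := hσt.symm
  have hb'ub : ∀ a ∈ Set.range (geomSeq t), er.le a (t * σ + 1) := by
    rintro a ⟨n, rfl⟩
    cases n with
    | zero =>
      show t * σ + 1 - geomSeq t 0 ∈ er.Epos
      rw [show geomSeq t 0 = 1 from rfl, add_sub_cancel_right]
      exact er.mul_Epos ht hσE htσ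
    | succ n =>
      show t * σ + 1 - geomSeq t (n + 1) ∈ er.Epos
      have heq : t * σ + 1 - geomSeq t (n + 1) = t * (σ - geomSeq t n) := by
        show _ - (1 + t * geomSeq t n) = _
        rw [mul_sub]; abel
      rw [heq]
      exact er.mul_Epos ht (hub (geomSeq t n) ⟨n, rfl⟩)
        ((Commute.sub_right htσ (commute_geomSeq (t := t) rfl n)).eq)
  have hσle : t * σ + 1 - σ ∈ er.Epos :=
    hlub (t * σ + 1) (er.Epos_subset_G (er.add_Epos (er.mul_Epos ht hσE htσ) er.one_Epos))
      hb'ub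
  -- the candidate inverse
  obtain ⟨h₀, hh₀_def⟩ : ∃ x : R, x = c * σ := ⟨_, rfl⟩
  have hgh₀ : g * h₀ = (1 - t) * σ := by
    rw [hh₀_def, hcgeq, ← mul_assoc, hcen g]
  have hu : 1 - g * h₀ ∈ er.Epos := by
    have heq : 1 - g * h₀ = t * σ + 1 - σ := by
      rw [hgh₀, sub_mul, one_mul]; abel
    rw [heq]; exact hσle
  have hcgE : (1 - t : R) ∈ er.Epos := by
    rw [hcgeq]
    exact er.mul_Epos hc hgE (hcen g)
  have hcg_comm : ∀ x : R, g * x = x * g → (1 - t) * x = x * (1 - t) := by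
    intro x hx2
    rw [hcgeq]
    exact (Commute.mul_left (hcen x) hx2).eq
  have hut : ∀ n : ℕ, t ^ (n + 1) - (1 - g * h₀) ∈ er.Epos := by
    intro n
    have heq : t ^ (n + 1) - (1 - g * h₀) = (1 - t) * (σ - geomSeq t n) := by
      rw [mul_sub, one_sub_mul_geomSeq, hgh₀]
      abel
    rw [heq]
    refine er.mul_Epos hcgE (hub (geomSeq t n) ⟨n, rfl⟩) ?_
    exact (Commute.sub_right (hcg_comm σ hσg.symm) (hcg_comm (geomSeq t n) (hgS n))).eq
  have hu_le : ∀ n : ℕ, (geomSeq t n - 1) - n • (1 - g * h₀) ∈ er.Epos := by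
    intro n
    induction n with
    | zero => simpa [geomSeq] using er.zero_Epos
    | succ n ih =>
      have heq : (geomSeq t (n + 1) - 1) - (n + 1) • (1 - g * h₀) =
          ((geomSeq t n - 1) - n • (1 - g * h₀)) + (t ^ (n + 1) - (1 - g * h₀)) := by
        rw [geomSeq_succ', succ_nsmul]
        abel
      rw [heq]
      exact er.add_Epos ih (hut n)
  have hbound : ∀ n : ℕ, er.le (n • (1 - g * h₀)) B := by
    intro n
    show B - n • (1 - g * h₀) ∈ er.Epos
    have heq : B - n • (1 - g * h₀) = (B - geomSeq t n) +
        ((geomSeq t n - 1) - n • (1 - g * h₀)) + 1 := by abel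
    rw [heq]
    exact er.add_Epos (er.add_Epos (hSB n) (hu_le n)) er.one_Epos
  have hu0 : 1 - g * h₀ = 0 := er.arch hCV hu (er.Epos_subset_G hB) hbound
  have hinv : g * h₀ = 1 := (sub_eq_zero.mp hu0).symm
  have hh₀g : h₀ * g = g * h₀ := by
    rw [hh₀_def]
    exact (Commute.mul_left (hcen g) hσg).eq
  have hh₀E : h₀ ∈ er.Epos := by
    rw [hh₀_def]; exact er.mul_Epos hc hσE (hcen σ)
  refine ⟨h₀, hh₀E, hinv, by rw [hh₀g, hinv], ?_⟩
  refine ⟨er.Epos_subset_G hh₀E, ?_⟩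
  intro x hx
  have hxg : x * g = g * x := hx.2 g rfl
  have hxt : x * t = t * x := comm_t x hxg
  have hxS : ∀ n, x * geomSeq t n = geomSeq t n * x := fun n => commute_geomSeq hxt n
  have hσx : σ * x = x * σ :=
    hσcc.2 x ⟨hx.1, by rintro a ⟨n, rfl⟩; exact hxS n⟩
  rw [hh₀_def]
  exact (Commute.mul_left (hcen x) hσx).eq

end ERing

end Aux

/-- In an AH-algebra, `0 ≤ g` is invertible iff `1 ≤ M·g` for some
`M ∈ ℕ`; moreover if `g` is invertible then `0 ≤ g⁻¹ ∈ CC(g)`. -/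
theorem stmt4 {R : Type*} [Ring R] (er : ERing R) (hAH : er.IsAH)
    (g : R) (hg : g ∈ er.G) (hg0 : er.le 0 g) :
    ((∃ h ∈ er.G, g * h = 1 ∧ h * g = 1) ↔ ∃ M : ℕ, er.le 1 (M • g)) ∧
    (∀ h ∈ er.G, g * h = 1 → h * g = 1 → er.le 0 h ∧ h ∈ er.CC {g}) := by
  have hgE : g ∈ er.Epos := by simpa [ERing.le] using hg0
  constructor
  · constructor
    · rintro ⟨h, hhG, hgh, hhg⟩
      exact er.inv_bound hgE hhG hgh hhg
    · rintro ⟨M, hM⟩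
      obtain ⟨h, hE, h1, h2', -⟩ := er.inv_construct hAH hg hg0 hM
      exact ⟨h, er.Epos_subset_G hE, h1, h2'⟩
  · intro h hhG hgh hhg
    obtain ⟨M, hM⟩ := er.inv_bound hgE hhG hgh hhg
    obtain ⟨h₀, hE, h1, h2', hcc⟩ := er.inv_construct hAH hg hg0 hM
    have heq : h = h₀ := by
      calc h = h * (g * h₀) := by rw [h1, mul_one]
        _ = (h * g) * h₀ := by rw [mul_assoc]
        _ = h₀ := by rw [hhg, one_mul]
    refine ⟨?_, heq ▸ hcc⟩
    show h - 0 ∈ er.Epos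
    rw [sub_zero, heq]
    exact hE
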